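/- Assume R > M², ℓ = M, M² < L ≤ R, and π_min < 1. Define the drift function V(x) = exp(log π(x)/log π_min). Then for every x ∈ X with x ≠ x*, (P_h V)(x) ≤ α·V(x), where (P_h V)(x) = Σ_{x'∈X} P_h(x,x')·V(x') and α = 1 + log(L/M)/(4·log π_min) + (e − 1)·M²/L (note log π_min < 0, so the middle term is negative). -/

import Mathlib

open Finset

noncomputable section

variable {X : Type*}

/-- Total variation distance between two (finitely supported) distributions. -/
def tvDist [Fintype X] (ζ μ : X → ℝ) : ℝ :=
  ⨆ A : Finset X, |∑ a ∈ A, ζ a - ∑ a ∈ A, μ a|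

/-- The lazy version `(P + I)/2` of a transition matrix. -/
def lazyM [Fintype X] [DecidableEq X] (P : Matrix X X ℝ) : Matrix X X ℝ :=
  (2 : ℝ)⁻¹ • (P + 1)

/-- Mixing time started from `x`. -/
def mixTimeFrom [Fintype X] [DecidableEq X] (P : Matrix X X ℝ) (μ : X → ℝ) (ε : ℝ) (x : X) : ℕ :=
  sInf {t : ℕ | tvDist (fun y => (P ^ t) x y) μ ≤ ε}

/-- Worst-case mixing time. -/
def mixTime [Fintype X] [DecidableEq X] (P : Matrix X X ℝ) (μ : X → ℝ) (ε : ℝ) : ℕ :=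
  Finset.univ.sup (mixTimeFrom P μ ε)

/-- Variational spectral gap of a reversible transition matrix. -/
def specGap [Fintype X] (P : Matrix X X ℝ) (μ : X → ℝ) : ℝ :=
  sInf { r : ℝ | ∃ f : X → ℝ,
    (2⁻¹ * ∑ x, ∑ y, (f x - f y) ^ 2 * μ x * μ y) ≠ 0 ∧
    r = (2⁻¹ * ∑ x, ∑ y, (f x - f y) ^ 2 * P x y * μ x) /
        (2⁻¹ * ∑ x, ∑ y, (f x - f y) ^ 2 * μ x * μ y) }

/-- Restricted spectral gap on `X0`. -/
def restGap [Fintype X] (P : Matrix X X ℝ) (μ : X → ℝ) (X0 : Finset X) : ℝ :=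
  sInf { r : ℝ | ∃ f : X → ℝ,
    0 < (∑ x ∈ X0, ∑ y ∈ X0, (f x - f y) ^ 2 * μ x * μ y) ∧
    r = (∑ x ∈ X0, ∑ y ∈ X0, (f x - f y) ^ 2 * P x y * μ x) /
        (∑ x ∈ X0, ∑ y ∈ X0, (f x - f y) ^ 2 * μ x * μ y) }

/-- `c(ρ) = 4 / (1 - ρ^{-1/2})³`. -/
def cFun (ρ : ℝ) : ℝ := 4 / (1 - ρ ^ (-(2 : ℝ)⁻¹)) ^ 3

/-- Maximum neighborhood size. -/
def Mmax [Fintype X] (N : X → Finset X) : ℕ := Finset.univ.sup fun x => (N x).card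

/-- Minimal value of `π`. -/
def piMin [Fintype X] [Nonempty X] (π : X → ℝ) : ℝ := ⨅ x, π x

/-- `R = min_{x ≠ x*} max_{y ∈ N(x)} π(y)/π(x)`. -/
def Rval [Fintype X] (π : X → ℝ) (N : X → Finset X) (xstar : X) : ℝ :=
  sInf ((fun x => sSup ((fun y => π y / π x) '' (N x : Set X))) '' {x | x ≠ xstar})

/-- Restricted `R|_{X₀}`. -/
def RvalRes [Fintype X] [DecidableEq X] (π : X → ℝ) (N : X → Finset X) (X0 : Finset X)
    (x0star : X) : ℝ :=
  sInf ((fun x => sSup ((fun y => π y / π x) '' ((N x ∩ X0 : Finset X) : Set X))) ''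
    {x | x ∈ X0 ∧ x ≠ x0star})

/-- Random walk Metropolis–Hastings transition matrix. -/
def rwMH [Fintype X] [DecidableEq X] (π : X → ℝ) (N : X → Finset X) : Matrix X X ℝ :=
  Matrix.of fun x y =>
    if y ∈ N x then min (((N x).card : ℝ))⁻¹ (π y / (π x * ((N y).card : ℝ)))
    else if y = x then
      1 - ∑ z ∈ N x, min (((N x).card : ℝ))⁻¹ (π z / (π x * ((N z).card : ℝ)))
    else 0

/-- The clipping function `clip(u, ℓ, L)`. -/
def clip (l L u : ℝ) : ℝ := if u < l then l else if u ≤ L then u else L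

/-- Normalizing constant of the informed proposal. -/
def Zh [Fintype X] (π : X → ℝ) (N : X → Finset X) (l L : ℝ) (x : X) : ℝ :=
  ∑ y ∈ N x, clip l L (π y / π x)

/-- Informed proposal kernel. -/
def Kh [Fintype X] [DecidableEq X] (π : X → ℝ) (N : X → Finset X) (l L : ℝ) (x y : X) : ℝ :=
  (if y ∈ N x then clip l L (π y / π x) else 0) / Zh π N l L x

/-- Informed Metropolis–Hastings transition matrix. -/
def infMH [Fintype X] [DecidableEq X] (π : X → ℝ) (N : X → Finset X) (l L : ℝ) :
    Matrix X X ℝ :=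
  Matrix.of fun x y =>
    if y = x then
      1 - ∑ z ∈ Finset.univ.erase x,
        Kh π N l L x z * min 1 ((π z * Kh π N l L z x) / (π x * Kh π N l L x z))
    else Kh π N l L x y * min 1 ((π y * Kh π N l L y x) / (π x * Kh π N l L x y))

/-- List of consecutive edges of a list of vertices. -/
def edgeList : List X → List (X × X)
  | a :: b :: rest => (a, b) :: edgeList (b :: rest)
  | _ => []

/-- `γ` is a path from `x` to `y` (x ≠ y) with all edges in `E` and no repeated edge. -/
def IsPathIn (E : Finset (X × X)) (x y : X) (γ : List X) : Prop :=
  x ≠ y ∧ γ.head? = some x ∧ γ.getLast? = some y ∧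
    (∀ e ∈ edgeList γ, e ∈ E) ∧ (edgeList γ).Nodup

/-- `Φ(x,y) = Σ_{γ ∈ Γ_E(x,y)} φ(γ)`. -/
def flowBetween (E : Finset (X × X)) (φ : List X → ℝ) (x y : X) : ℝ :=
  ∑' γ : {γ : List X // IsPathIn E x y γ}, φ γ

/-- Flow from `x` to `y` through the edge `e`. -/
def flowBetweenThrough (E : Finset (X × X)) (φ : List X → ℝ) (x y : X) (e : X × X) : ℝ :=
  ∑' γ : {γ : List X // IsPathIn E x y γ ∧ e ∈ edgeList γ}, φ γ

/-- `w`-length of a path. -/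
def wlen (w : X × X → ℝ) (γ : List X) : ℝ := ((edgeList γ).map w).sum

/-- Congestion `A(E, w, φ)`. -/
def congestion [Fintype X] (π : X → ℝ) (P : Matrix X X ℝ) (E : Finset (X × X))
    (w : X × X → ℝ) (φ : List X → ℝ) : ℝ :=
  ⨆ e ∈ E,
    (∑' γ : {γ : List X // (∃ x y, IsPathIn E x y γ) ∧ e ∈ edgeList γ}, wlen w γ * φ γ) /
      (π e.1 * P e.1 e.2 * w e)

/-- `N_S(x) = {x' ∈ N(x) : π(x')/π(x) ≥ S}`. -/
def NS [Fintype X] (π : X → ℝ) (N : X → Finset X) (S : ℝ) (x : X) : Finset X :=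
  (N x).filter fun y => S ≤ π y / π x

/-- Edge set `E_S`. -/
def ES [Fintype X] [DecidableEq X] (π : X → ℝ) (N : X → Finset X) (S : ℝ) : Finset (X × X) :=
  Finset.univ.filter fun e => e.1 ∈ NS π N S e.2 ∨ e.2 ∈ NS π N S e.1

/-- Restricted `N|^S_{X₀}(x)`. -/
def NSres [Fintype X] [DecidableEq X] (π : X → ℝ) (N : X → Finset X) (X0 : Finset X) (S : ℝ)
    (x : X) : Finset X :=
  ((N x) ∩ X0).filter fun y => S ≤ π y / π x

/-- Restricted edge set `E_S⁰`. -/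
def ESres [Fintype X] [DecidableEq X] (π : X → ℝ) (N : X → Finset X) (X0 : Finset X)
    (S : ℝ) : Finset (X × X) :=
  Finset.univ.filter fun e =>
    (e.1 ∈ X0 ∧ e.2 ∈ X0) ∧ (e.1 ∈ NSres π N X0 S e.2 ∨ e.2 ∈ NSres π N X0 S e.1)

end

section AuxLemmas

open Finset

lemma clip_ge {l L : ℝ} (h : l ≤ L) (u : ℝ) : l ≤ clip l L u := by
  unfold clip; split_ifs with h1 h2
  · exact le_refl l
  · exact le_of_not_gt h1
  · exact h

lemma clip_le {l L : ℝ} (h : l ≤ L) (u : ℝ) : clip l L u ≤ L := by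
  unfold clip; split_ifs with h1 h2
  · exact h
  · exact h2
  · exact le_refl L

lemma clip_eq_of_ge {l L u : ℝ} (h : l ≤ L) (hu : L ≤ u) : clip l L u = L := by
  unfold clip; split_ifs with h1 h2
  · linarith
  · linarith
  · rfl

lemma clip_eq_self {l L u : ℝ} (h1 : l ≤ u) (h2 : u ≤ L) : clip l L u = u := by
  unfold clip; split_ifs
  all_goals first | rfl | linarith

lemma clip_eq_l {l L u : ℝ} (hu : u < l) : clip l L u = l := by
  unfold clip; rw [if_pos hu]

lemma clip_le_max {l L u : ℝ} : clip l L u ≤ max u l := by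
  unfold clip; split_ifs with h1 h2
  · exact le_max_right _ _
  · exact le_max_left _ _
  · exact le_max_of_le_left (by linarith)

lemma exp_le_one_add_half {s : ℝ} (h1 : -1 ≤ s) (h2 : s ≤ 0) :
    Real.exp s ≤ 1 + s / 2 := by
  have hconv := convexOn_exp.2 (Set.mem_univ (-1 : ℝ)) (Set.mem_univ (0 : ℝ))
    (by linarith : (0:ℝ) ≤ -s) (by linarith : (0:ℝ) ≤ 1 + s) (by ring)
  simp only [smul_eq_mul] at hconv
  rw [show (-s) * (-1) + (1+s) * 0 = s by ring, Real.exp_zero] at hconv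
  have h4 : (2:ℝ) ≤ Real.exp 1 := by
    have := Real.add_one_le_exp (1:ℝ); linarith
  have he : Real.exp (-1) ≤ 1/2 := by
    rw [Real.exp_neg]
    calc (Real.exp 1)⁻¹ ≤ (2:ℝ)⁻¹ := inv_anti₀ (by norm_num) h4
    _ = 1/2 := by norm_num
  nlinarith [hconv]

lemma mul_log_sub_ge {u c : ℝ} (hu : 0 < u) :
    -(Real.exp (c - 1)) ≤ u * (Real.log u - c) := by
  set v := Real.log u - c with hv
  have hu' : u = Real.exp (v + c) := by
    rw [hv]; rw [sub_add_cancel, Real.exp_log hu]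
  rw [hu']
  rcases le_or_gt 0 v with h | h
  · have : (0:ℝ) ≤ Real.exp (v+c) * v := mul_nonneg (Real.exp_nonneg _) h
    have := Real.exp_pos (c-1)
    linarith
  · have h1 : -v ≤ Real.exp (-1 - v) := by
      have := Real.add_one_le_exp (-1 - v); linarith
    have h2 : Real.exp (v + c) * (-v) ≤ Real.exp (v+c) * Real.exp (-1-v) :=
      mul_le_mul_of_nonneg_left h1 (Real.exp_nonneg _)
    rw [← Real.exp_add] at h2
    rw [show v + c + (-1 - v) = c - 1 by ring] at h2
    linarith

lemma infMH_rowsum {X : Type*} [Fintype X] [DecidableEq X]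
    (π : X → ℝ) (N : X → Finset X) (l L : ℝ) (x : X) :
    ∑ y, infMH π N l L x y = 1 := by
  rw [← Finset.add_sum_erase _ _ (Finset.mem_univ x)]
  have h1 : ∑ y ∈ Finset.univ.erase x, infMH π N l L x y
      = ∑ z ∈ Finset.univ.erase x,
        Kh π N l L x z * min 1 ((π z * Kh π N l L z x) / (π x * Kh π N l L x z)) := by
    apply Finset.sum_congr rfl
    intro y hy
    have hyx : y ≠ x := (Finset.mem_erase.1 hy).1
    simp [infMH, hyx]
  rw [h1]
  have h2 : infMH π N l L x x = 1 - ∑ z ∈ Finset.univ.erase x,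
      Kh π N l L x z * min 1 ((π z * Kh π N l L z x) / (π x * Kh π N l L x z)) := by
    simp [infMH]
  rw [h2]; ring

lemma core_key_arith (M' L c k g : ℝ) (hM1 : 1 ≤ M') (hL1 : M' ^ 2 < L)
    (hMleL : M' ≤ L) (hc : c = (Real.log L - Real.log M') / 2)
    (hk : k ≤ M' - g) (hknn : 0 ≤ k) (hg1 : 1 ≤ g) (hgM : g ≤ M')
    (hMcase : M' = 1 ∨ 2 ≤ M') :
    c * (k * M') ≤ L * (Real.log L - c) + (g - 1) * (-(Real.exp (c - 1))) := by
  have hM0 : (0:ℝ) < M' := lt_of_lt_of_le one_pos hM1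
  have hL0 : (0:ℝ) < L := lt_of_lt_of_le hM0 hMleL
  have hlogM0 : 0 ≤ Real.log M' := Real.log_nonneg hM1
  have hlogLM : Real.log M' ≤ Real.log L := Real.log_le_log hM0 hMleL
  have hc0 : 0 ≤ c := by rw [hc]; linarith
  have hcL : c ≤ Real.log L := by rw [hc]; linarith
  have he2 : (2:ℝ) ≤ Real.exp 1 := by have := Real.add_one_le_exp (1:ℝ); linarith
  rcases hMcase with hMeq | hM2
  · have hkz : k = 0 := le_antisymm (by rw [hMeq] at hk; linarith) hknn
    have hgz : g = 1 := le_antisymm (by rw [hMeq] at hgM; linarith) hg1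
    rw [hkz, hgz]
    have h7 : (0:ℝ) ≤ L * (Real.log L - c) := mul_nonneg hL0.le (by linarith)
    have h8 : c * ((0:ℝ) * M') = 0 := by ring
    linarith
  · have he1 : Real.exp (c - 1) = Real.exp c * Real.exp (-1) := by
      rw [← Real.exp_add]; ring_nf
    have hexpc : Real.exp c ≤ L / M' := by
      have h1 : c ≤ Real.log (L / M') := by
        rw [Real.log_div hL0.ne' hM0.ne', hc]; linarith
      calc Real.exp c ≤ Real.exp (Real.log (L/M')) := Real.exp_le_exp.2 h1
      _ = L / M' := Real.exp_log (div_pos hL0 hM0)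
    have hME : M' * Real.exp (c-1) ≤ L * Real.exp (-1) := by
      rw [he1]
      calc M' * (Real.exp c * Real.exp (-1)) = (M' * Real.exp c) * Real.exp (-1) := by ring
      _ ≤ (M' * (L/M')) * Real.exp (-1) :=
          mul_le_mul_of_nonneg_right
            (mul_le_mul_of_nonneg_left hexpc hM0.le) (Real.exp_nonneg _)
      _ = L * Real.exp (-1) := by rw [mul_div_cancel₀ _ hM0.ne']
    have hed : Real.exp (-1) ≤ Real.log 2 := by
      have h2 : Real.exp (-1) ≤ (2:ℝ)⁻¹ := by
        rw [Real.exp_neg]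
        exact inv_anti₀ (by norm_num) he2
      have h3 : Real.log (2⁻¹) ≤ (2:ℝ)⁻¹ - 1 :=
        Real.log_le_sub_one_of_pos (by norm_num)
      rw [Real.log_inv] at h3
      linarith
    have hlog2 : Real.log 2 ≤ Real.log M' := Real.log_le_log (by norm_num : (0:ℝ) < 2) hM2
    have hA2 : L * (Real.log L - c) = L * c + L * Real.log M' := by rw [hc]; ring
    have hgE : (g - 1) * Real.exp (c-1) ≤ M' * Real.exp (c-1) := by
      apply mul_le_mul_of_nonneg_right _ (Real.exp_nonneg _)
      linarith
    have hck : c * (k * M') ≤ c * ((M' - 1) * M') := by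
      apply mul_le_mul_of_nonneg_left _ hc0
      apply mul_le_mul_of_nonneg_right _ hM0.le
      linarith
    have hMM : (M' - 1) * M' ≤ L - M' := by nlinarith
    have hckL : c * ((M'-1) * M') ≤ c * (L - M') := mul_le_mul_of_nonneg_left hMM hc0
    have hll : L * Real.exp (-1) ≤ L * Real.log M' :=
      mul_le_mul_of_nonneg_left (by linarith) hL0.le
    have hcM : 0 ≤ c * M' := mul_nonneg hc0 hM0.le
    linarith

end AuxLemmas

set_option maxHeartbeats 4000000 in
theorem stmt4 {X : Type*} [Fintype X] [DecidableEq X] [Nonempty X]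
    (π : X → ℝ) (hπpos : ∀ x, 0 < π x) (hπsum : ∑ x, π x = 1)
    (N : X → Finset X)
    (hNirr : ∀ x, x ∉ N x)
    (hNsym : ∀ x y, y ∈ N x → x ∈ N y)
    (hNconn : ∀ x y : X, Relation.ReflTransGen (fun a b => b ∈ N a) x y)
    (xstar : X) (hxstar : ∀ x, π x ≤ π xstar)
    (hRM : ((Mmax N : ℝ)) ^ 2 < Rval π N xstar)
    (L : ℝ) (hL1 : ((Mmax N : ℝ)) ^ 2 < L) (hL2 : L ≤ Rval π N xstar)
    (hpm : piMin π < 1)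
    (x : X) (hx : x ≠ xstar) :
    ∑ y, infMH π N (Mmax N) L x y * Real.exp (Real.log (π y) / Real.log (piMin π)) ≤
      (1 + Real.log (L / (Mmax N : ℝ)) / (4 * Real.log (piMin π)) +
        (Real.exp 1 - 1) * ((Mmax N : ℝ)) ^ 2 / L) *
        Real.exp (Real.log (π x) / Real.log (piMin π)) := by
  classical
  -- basic facts about M'
  have hNesum : ∀ z w : X, z ≠ w → (N z).Nonempty := by
    intro z w hzw
    rcases (Relation.ReflTransGen.cases_head (hNconn z w)) with h | ⟨c, hc, _⟩
    · exact absurd h hzw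
    · exact ⟨c, hc⟩
  have hcardN : ∀ z, (N z).card ≤ Mmax N := by
    intro z; exact Finset.le_sup (f := fun w => (N w).card) (Finset.mem_univ z)
  have hMmax1 : 1 ≤ Mmax N :=
    le_trans (Finset.card_pos.2 (hNesum x xstar hx)) (hcardN x)
  set M' : ℝ := ((Mmax N : ℝ)) with hM'def
  have hM1 : (1:ℝ) ≤ M' := by rw [hM'def]; exact_mod_cast hMmax1
  have hM0 : (0:ℝ) < M' := lt_of_lt_of_le one_pos hM1
  have hMleL : M' ≤ L := by nlinarith
  have hL0 : (0:ℝ) < L := lt_of_lt_of_le hM0 hMleL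
  have hL1' : (1:ℝ) ≤ L := le_trans hM1 hMleL
  have hcard : ∀ z : X, ((N z).card : ℝ) ≤ M' := by
    intro z; rw [hM'def]; exact_mod_cast hcardN z
  -- basic facts about π and piMin
  have hπle1 : ∀ y, π y ≤ 1 := by
    intro y
    rw [← hπsum]
    exact Finset.single_le_sum (fun i _ => (hπpos i).le) (Finset.mem_univ y)
  have hpm_le : ∀ y, piMin π ≤ π y := fun y =>
    ciInf_le (Set.Finite.bddBelow (Set.finite_range π)) y
  have hpm_pos : 0 < piMin π := by
    have h1 : sInf (Set.range π) ∈ Set.range π :=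
      Set.Nonempty.csInf_mem (Set.range_nonempty π) (Set.finite_range π)
    rcases h1 with ⟨z, hz⟩
    have : piMin π = π z := hz.symm
    rw [this]; exact hπpos z
  have hlpm : Real.log (piMin π) < 0 := Real.log_neg hpm_pos hpm
  have hlognp : ∀ y, Real.log (π y) ≤ 0 := fun y => Real.log_nonpos (hπpos y).le (hπle1 y)
  have hloglb : ∀ y, Real.log (piMin π) ≤ Real.log (π y) := fun y =>
    Real.log_le_log hpm_pos (hpm_le y)
  -- rewrite log (L / M') in the goal
  rw [Real.log_div (ne_of_gt hL0) (ne_of_gt hM0)]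
  -- the drift function V
  set V : X → ℝ := fun y => Real.exp (Real.log (π y) / Real.log (piMin π)) with hVdef
  have hV1 : ∀ y, 1 ≤ V y := by
    intro y
    rw [hVdef, show (1:ℝ) = Real.exp 0 from Real.exp_zero.symm]
    apply Real.exp_le_exp.2
    rw [← neg_div_neg_eq]
    exact div_nonneg (neg_nonneg.2 (hlognp y)) (neg_nonneg.2 hlpm.le)
  have hVe : ∀ y, V y ≤ Real.exp 1 := by
    intro y
    rw [hVdef]
    exact Real.exp_le_exp.2 ((div_le_iff_of_neg hlpm).2 (by linarith [hloglb y]))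
  have hVmono : ∀ y z, π y ≤ π z → V z ≤ V y := by
    intro y z h
    rw [hVdef]
    exact Real.exp_le_exp.2 ((div_le_div_right_of_neg hlpm).2
      (Real.log_le_log (hπpos y) h))
  -- great neighbors and Z bounds
  have hgreat : ∀ z, z ≠ xstar → ∃ y ∈ N z, L * π z ≤ π y := by
    intro z hz
    have hNz : (N z).Nonempty := hNesum z xstar hz
    set T : Set ℝ := (fun y => π y / π z) '' ((N z : Finset X) : Set X) with hT
    have hTne : T.Nonempty := by
      obtain ⟨y, hy⟩ := hNz
      exact ⟨π y / π z, ⟨y, by simpa using hy, rfl⟩⟩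
    have hTfin : T.Finite := Set.Finite.image _ (Set.toFinite _)
    have hmem : sSup T ∈ T := Set.Nonempty.csSup_mem hTne hTfin
    obtain ⟨y, hyN, hyval⟩ := hmem
    have hyN' : y ∈ N z := by simpa using hyN
    refine ⟨y, hyN', ?_⟩
    have hRle : Rval π N xstar ≤ sSup T := by
      have hSfin : ((fun x => sSup ((fun y => π y / π x) '' ((N x : Finset X) : Set X))) ''
          {x | x ≠ xstar}).Finite := Set.Finite.image _ (Set.toFinite _)
      have : sSup T ∈ (fun x => sSup ((fun y => π y / π x) '' ((N x : Finset X) : Set X))) ''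
          {x | x ≠ xstar} := ⟨z, hz, by rw [hT]⟩
      exact csInf_le (Set.Finite.bddBelow hSfin) this
    have hyval' : π y / π z = sSup T := hyval
    have hLle : L ≤ π y / π z := by rw [hyval']; exact le_trans hL2 hRle
    exact (le_div_iff₀ (hπpos z)).1 hLle
  set Z : X → ℝ := fun z => Zh π N M' L z with hZdef
  have hZnn : ∀ z, 0 ≤ Z z := by
    intro z
    exact Finset.sum_nonneg fun y _ => le_trans hM0.le (clip_ge hMleL _)
  have hZpos : ∀ z, (N z).Nonempty → 0 < Z z := by
    intro z ⟨y, hy⟩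
    have h1 : M' ≤ clip M' L (π y / π z) := clip_ge hMleL _
    have h2 : clip M' L (π y / π z) ≤ Z z :=
      Finset.single_le_sum (f := fun w => clip M' L (π w / π z))
        (fun i _ => le_trans hM0.le (clip_ge hMleL _)) hy
    linarith
  have hZub : ∀ z, Z z ≤ M' * L := by
    intro z
    calc Z z ≤ (N z).card • L :=
          Finset.sum_le_card_nsmul _ _ _ (fun y _ => clip_le hMleL _)
    _ = ((N z).card : ℝ) * L := nsmul_eq_mul _ _
    _ ≤ M' * L := mul_le_mul_of_nonneg_right (hcard z) hL0.le
  have hZlb : ∀ z, z ≠ xstar → L ≤ Z z := by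
    intro z hz
    obtain ⟨y, hy, hgy⟩ := hgreat z hz
    have h1 : L ≤ π y / π z := (le_div_iff₀ (hπpos z)).2 (by linarith [hgy])
    have h2 : clip M' L (π y / π z) = L := clip_eq_of_ge hMleL h1
    calc L = clip M' L (π y / π z) := h2.symm
    _ ≤ Z z := Finset.single_le_sum (f := fun w => clip M' L (π w / π z))
        (fun i _ => le_trans hM0.le (clip_ge hMleL _)) hy
  -- K facts
  have hKmem : ∀ z y, y ∈ N z → Kh π N M' L z y = clip M' L (π y / π z) / Z z := by
    intro z y hy
    rw [hZdef]; unfold Kh; rw [if_pos hy]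
  have hKpos : ∀ z y, y ∈ N z → 0 < Kh π N M' L z y := by
    intro z y hy
    rw [hKmem z y hy]
    exact div_pos (lt_of_lt_of_le hM0 (clip_ge hMleL _)) (hZpos z ⟨y, hy⟩)
  have hKnn : ∀ z y, 0 ≤ Kh π N M' L z y := by
    intro z y
    unfold Kh
    apply div_nonneg _ (hZnn z)
    split_ifs
    · exact le_trans hM0.le (clip_ge hMleL _)
    · exact le_refl 0
  -- exp 1 ≥ 2
  have he2 : (2:ℝ) ≤ Real.exp 1 := by have := Real.add_one_le_exp (1:ℝ); linarith
  have hZx : L ≤ Z x := hZlb x hx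
  have hZxpos : 0 < Z x := lt_of_lt_of_le hL0 hZx
  -- P facts
  set P : Matrix X X ℝ := infMH π N M' L with hPdef
  have hPoff : ∀ y, y ≠ x → P x y =
      Kh π N M' L x y * min 1 ((π y * Kh π N M' L y x) / (π x * Kh π N M' L x y)) := by
    intro y hyx
    rw [hPdef]; unfold infMH; simp [hyx]
  have hPnn : ∀ y, y ≠ x → 0 ≤ P x y := by
    intro y hyx
    rw [hPoff y hyx]
    apply mul_nonneg (hKnn x y)
    exact le_min one_pos.le (div_nonneg (mul_nonneg (hπpos y).le (hKnn y x))
      (mul_nonneg (hπpos x).le (hKnn x y)))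
  have hPzero : ∀ y, y ≠ x → y ∉ N x → P x y = 0 := by
    intro y hyx hyN
    rw [hPoff y hyx]
    have hz : Kh π N M' L x y = 0 := by unfold Kh; rw [if_neg hyN, zero_div]
    rw [hz, zero_mul]
  have hrow : ∑ y, P x y = 1 := infMH_rowsum π N M' L x
  have hsplit : ∑ y, P x y * V y = V x + ∑ y ∈ N x, P x y * (V y - V x) := by
    have e1 : ∑ y, P x y * V y = ∑ y, (P x y * (V y - V x) + P x y * V x) := by
      apply Finset.sum_congr rfl; intro y _; ring
    rw [e1, Finset.sum_add_distrib, ← Finset.sum_mul, hrow, one_mul, add_comm]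
    congr 1
    refine (Finset.sum_subset (Finset.subset_univ (N x)) ?_).symm
    intro y _ hyN
    by_cases hyx : y = x
    · rw [hyx, sub_self, mul_zero]
    · rw [hPzero y hyx hyN, zero_mul]
  -- partition of N x
  set G := (N x).filter (fun y => M' * π x ≤ π y) with hGdef
  set B := (N x).filter (fun y => π y < π x) with hBdef
  have hGsub : G ⊆ N x := Finset.filter_subset _ _
  have hBsub : B ⊆ N x := Finset.filter_subset _ _
  have hGB : Disjoint G B := by
    rw [Finset.disjoint_left]
    intro a haG haB
    have h1 : M' * π x ≤ π a := (Finset.mem_filter.1 haG).2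
    have h2 : π a < π x := (Finset.mem_filter.1 haB).2
    nlinarith [hπpos x]
  have hGBsub : G ∪ B ⊆ N x := Finset.union_subset hGsub hBsub
  have hdecomp : ∑ y ∈ N x, P x y * (V y - V x)
      = ∑ y ∈ N x \ (G ∪ B), P x y * (V y - V x)
        + (∑ y ∈ G, P x y * (V y - V x) + ∑ y ∈ B, P x y * (V y - V x)) := by
    rw [← Finset.sum_union hGB, Finset.sum_sdiff hGBsub]
  have hrest : ∑ y ∈ N x \ (G ∪ B), P x y * (V y - V x) ≤ 0 := by
    apply Finset.sum_nonpos
    intro y hy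
    obtain ⟨hyN, hyGB⟩ := Finset.mem_sdiff.1 hy
    have hyB : ¬ π y < π x := fun h =>
      hyGB (Finset.mem_union_right _ (Finset.mem_filter.2 ⟨hyN, h⟩))
    have hyx : y ≠ x := fun h => hNirr x (h ▸ hyN)
    have hVle : V y ≤ V x := hVmono x y (le_of_not_gt hyB)
    exact mul_nonpos_iff.2 (Or.inl ⟨hPnn y hyx, by linarith⟩)
  -- bad sum
  have hbadsum : ∑ y ∈ B, P x y * (V y - V x) ≤ (Real.exp 1 - 1) * M' ^ 2 / L := by
    have hterm : ∀ y ∈ B, P x y * (V y - V x) ≤ (Real.exp 1 - 1) * (M' / L) := by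
      intro y hyB
      obtain ⟨hyN, hylt⟩ := Finset.mem_filter.1 hyB
      have hyx : y ≠ x := fun h => hNirr x (h ▸ hyN)
      have hyxs : y ≠ xstar := by
        intro h; rw [h] at hylt; linarith [hxstar x]
      have hxNy : x ∈ N y := hNsym x y hyN
      have hKxy := hKmem x y hyN
      have hKyx := hKmem y x hxNy
      have hKxy0 : 0 < Kh π N M' L x y := hKpos x y hyN
      have hπxne : π x ≠ 0 := (hπpos x).ne'
      have hP1 : P x y ≤ π y * Kh π N M' L y x / π x := by
        rw [hPoff y hyx]
        have heq : Kh π N M' L x y * ((π y * Kh π N M' L y x) / (π x * Kh π N M' L x y))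
            = π y * Kh π N M' L y x / π x := by
          field_simp
        rw [← heq]
        exact mul_le_mul_of_nonneg_left (min_le_right _ _) (hKnn x y)
      have hZy : L ≤ Z y := hZlb y hyxs
      have hnum : π y * Kh π N M' L y x / π x ≤ M' / L := by
        rw [hKyx]
        have heq2 : π y * (clip M' L (π x / π y) / Z y) / π x
            = (π y / π x * clip M' L (π x / π y)) / Z y := by ring
        rw [heq2]
        have hb1 : π y / π x * clip M' L (π x / π y) ≤ M' := by
          have hd0 : (0:ℝ) ≤ π y / π x := div_nonneg (hπpos y).le (hπpos x).le
          have h3 : π y / π x * clip M' L (π x / π y) ≤ π y / π x * max (π x / π y) M' :=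
            mul_le_mul_of_nonneg_left clip_le_max hd0
          have hv1 : π y / π x * (π x / π y) = 1 := by
            rw [div_mul_div_comm, div_eq_one_iff_eq (mul_pos (hπpos x) (hπpos y)).ne']
            ring
          have h5 : π y / π x * M' ≤ 1 * M' := by
            apply mul_le_mul_of_nonneg_right _ hM0.le
            exact (div_le_one (hπpos x)).2 hylt.le
          calc π y / π x * clip M' L (π x / π y) ≤ π y / π x * max (π x / π y) M' := h3
          _ = max (π y / π x * (π x / π y)) (π y / π x * M') := by
              rw [mul_max_of_nonneg _ _ hd0]
          _ ≤ M' := max_le (by rw [hv1]; exact hM1) (by linarith)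
        exact div_le_div₀ hM0.le hb1 hL0 hZy
      have hVd : V y - V x ≤ Real.exp 1 - 1 := by linarith [hVe y, hV1 x]
      have hVd0 : 0 ≤ V y - V x := by linarith [hVmono y x hylt.le]
      calc P x y * (V y - V x) ≤ (M' / L) * (Real.exp 1 - 1) := by
            apply mul_le_mul (le_trans hP1 hnum) hVd hVd0 (div_nonneg hM0.le hL0.le)
      _ = (Real.exp 1 - 1) * (M' / L) := by ring
    calc ∑ y ∈ B, P x y * (V y - V x) ≤ B.card • ((Real.exp 1 - 1) * (M' / L)) :=
          Finset.sum_le_card_nsmul _ _ _ hterm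
    _ = (B.card : ℝ) * ((Real.exp 1 - 1) * (M' / L)) := nsmul_eq_mul _ _
    _ ≤ M' * ((Real.exp 1 - 1) * (M' / L)) := by
          apply mul_le_mul_of_nonneg_right _ (mul_nonneg (by linarith) (div_nonneg hM0.le hL0.le))
          calc (B.card : ℝ) ≤ ((N x).card : ℝ) := by exact_mod_cast Finset.card_le_card hBsub
          _ ≤ M' := hcard x
    _ = (Real.exp 1 - 1) * M' ^ 2 / L := by ring
  -- the core combinatorial inequality
  obtain ⟨ys, hysN, hysge⟩ := hgreat x hx
  have hysG : ys ∈ G := by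
    rw [hGdef]
    refine Finset.mem_filter.2 ⟨hysN, ?_⟩
    nlinarith [hπpos x]
  set c := (Real.log L - Real.log M') / 2 with hc
  have hlogM0 : 0 ≤ Real.log M' := Real.log_nonneg hM1
  have hlogLM : Real.log M' ≤ Real.log L := Real.log_le_log hM0 hMleL
  have hc0 : 0 ≤ c := by rw [hc]; linarith
  have hcL : c ≤ Real.log L := by rw [hc]; linarith
  have hcore : c * Z x ≤ ∑ y ∈ G, clip M' L (π y / π x) * Real.log (π y / π x) := by
    have hZsplit : Z x = ∑ y ∈ N x \ G, clip M' L (π y / π x)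
        + ∑ y ∈ G, clip M' L (π y / π x) := (Finset.sum_sdiff hGsub).symm
    have hout : ∀ y ∈ N x \ G, clip M' L (π y / π x) = M' := by
      intro y hy
      obtain ⟨hyN, hyG⟩ := Finset.mem_sdiff.1 hy
      have h1 : ¬ M' * π x ≤ π y := fun h =>
        hyG (by rw [hGdef]; exact Finset.mem_filter.2 ⟨hyN, h⟩)
      exact clip_eq_l ((div_lt_iff₀ (hπpos x)).2 (by linarith [lt_of_not_ge h1]))
    have houts : ∑ y ∈ N x \ G, clip M' L (π y / π x) = ((N x \ G).card : ℝ) * M' := by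
      rw [Finset.sum_congr rfl hout, Finset.sum_const, nsmul_eq_mul]
    have hterm1 : L * (Real.log L - c) ≤ clip M' L (π ys / π x) * (Real.log (π ys / π x) - c) := by
      have hus : L ≤ π ys / π x := (le_div_iff₀ (hπpos x)).2 (by linarith)
      rw [clip_eq_of_ge hMleL hus]
      apply mul_le_mul_of_nonneg_left _ hL0.le
      have := Real.log_le_log hL0 hus
      linarith
    have hterm2 : ∀ y ∈ G.erase ys,
        -(Real.exp (c-1)) ≤ clip M' L (π y / π x) * (Real.log (π y / π x) - c) := by
      intro y hy
      have hyG := Finset.mem_of_mem_erase hy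
      have hyge : M' * π x ≤ π y := by
        have := Finset.mem_filter.1 (hGdef ▸ hyG); exact this.2
      have hu : M' ≤ π y / π x := (le_div_iff₀ (hπpos x)).2 (by linarith)
      have hu0 : 0 < π y / π x := div_pos (hπpos y) (hπpos x)
      rcases le_or_gt c (Real.log (π y / π x)) with h | h
      · have h2 : 0 ≤ clip M' L (π y / π x) * (Real.log (π y / π x) - c) :=
          mul_nonneg (le_trans hM0.le (clip_ge hMleL _)) (by linarith)
        linarith [Real.exp_pos (c-1)]
      · have huL : π y / π x ≤ L := by
          calc π y / π x = Real.exp (Real.log (π y / π x)) := (Real.exp_log hu0).symm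
          _ ≤ Real.exp (Real.log L) := Real.exp_le_exp.2 (by linarith)
          _ = L := by rw [Real.exp_log hL0]
        rw [clip_eq_self hu huL]
        exact mul_log_sub_ge hu0
    have hsum1 : ((G.erase ys).card : ℝ) * (-(Real.exp (c-1)))
        ≤ ∑ y ∈ G.erase ys, clip M' L (π y / π x) * (Real.log (π y / π x) - c) := by
      have h1 := Finset.card_nsmul_le_sum (G.erase ys)
        (fun y => clip M' L (π y / π x) * (Real.log (π y / π x) - c)) _ hterm2
      rwa [nsmul_eq_mul] at h1
    have hgcard : 1 ≤ G.card := Finset.card_pos.2 ⟨ys, hysG⟩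
    have hg1 : (1:ℝ) ≤ (G.card : ℝ) := by exact_mod_cast hgcard
    have hgM : (G.card : ℝ) ≤ M' := le_trans (by exact_mod_cast Finset.card_le_card hGsub) (hcard x)
    have hkcard : ((N x \ G).card : ℝ) = ((N x).card : ℝ) - (G.card : ℝ) := by
      rw [Finset.card_sdiff_of_subset hGsub, Nat.cast_sub (Finset.card_le_card hGsub)]
    have hecard : ((G.erase ys).card : ℝ) = (G.card : ℝ) - 1 := by
      rw [Finset.card_erase_of_mem hysG, Nat.cast_sub hgcard, Nat.cast_one]
    have hglow : L * (Real.log L - c) + ((G.card:ℝ) - 1) * (-(Real.exp (c-1)))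
        ≤ ∑ y ∈ G, clip M' L (π y / π x) * (Real.log (π y / π x) - c) := by
      rw [← Finset.add_sum_erase _ _ hysG]
      apply add_le_add hterm1
      rw [← hecard]
      exact hsum1
    have hkey : c * (((N x \ G).card : ℝ) * M')
        ≤ L * (Real.log L - c) + ((G.card:ℝ) - 1) * (-(Real.exp (c-1))) := by
      apply core_key_arith M' L c _ _ hM1 hL1 hMleL hc
      · rw [hkcard]; linarith [hcard x]
      · exact Nat.cast_nonneg _
      · exact hg1
      · exact hgM
      · rcases Nat.lt_or_ge (Mmax N) 2 with hM | hM
        · left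
          rw [hM'def]
          have h9 : Mmax N = 1 := by omega
          rw [h9, Nat.cast_one]
        · right
          rw [hM'def]; exact_mod_cast hM
    have hSsplit : ∑ y ∈ G, clip M' L (π y / π x) * Real.log (π y / π x)
        = ∑ y ∈ G, clip M' L (π y / π x) * (Real.log (π y / π x) - c)
          + c * ∑ y ∈ G, clip M' L (π y / π x) := by
      rw [Finset.mul_sum, ← Finset.sum_add_distrib]
      apply Finset.sum_congr rfl; intro y _; ring
    calc c * Z x = c * (((N x \ G).card:ℝ) * M') + c * ∑ y ∈ G, clip M' L (π y / π x) := by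
          rw [hZsplit, houts]; ring
    _ ≤ (L * (Real.log L - c) + ((G.card:ℝ) - 1) * (-(Real.exp (c-1))))
          + c * ∑ y ∈ G, clip M' L (π y / π x) := add_le_add_left hkey _
    _ ≤ ∑ y ∈ G, clip M' L (π y / π x) * (Real.log (π y / π x) - c)
          + c * ∑ y ∈ G, clip M' L (π y / π x) := add_le_add_left hglow _
    _ = ∑ y ∈ G, clip M' L (π y / π x) * Real.log (π y / π x) := hSsplit.symm
  -- good sum
  have hgoodsum : ∑ y ∈ G, P x y * (V y - V x)
      ≤ (Real.log L - Real.log M') / (4 * Real.log (piMin π)) * V x := by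
    have hstep : ∀ y ∈ G, P x y * (V y - V x)
        ≤ V x / (2 * Real.log (piMin π))
          * (clip M' L (π y / π x) / Z x * Real.log (π y / π x)) := by
      intro y hyG
      have hyN : y ∈ N x := hGsub hyG
      have hyge : M' * π x ≤ π y := by
        have := Finset.mem_filter.1 (hGdef ▸ hyG); exact this.2
      have hu : M' ≤ π y / π x := (le_div_iff₀ (hπpos x)).2 (by linarith)
      have hyx : y ≠ x := fun h => hNirr x (h ▸ hyN)
      have hxNy : x ∈ N y := hNsym x y hyN
      have hKxy := hKmem x y hyN
      have hKyx := hKmem y x hxNy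
      have hZy : Z y ≤ M' * L := hZub y
      have hZypos : 0 < Z y := hZpos y ⟨x, hxNy⟩
      have hclipy : M' ≤ clip M' L (π x / π y) := clip_ge hMleL _
      have hclipu : clip M' L (π y / π x) ≤ π y / π x :=
        le_trans clip_le_max (by rw [max_eq_left hu])
      have hmain : π x * Kh π N M' L x y ≤ π y * Kh π N M' L y x := by
        rw [hKxy, hKyx]
        have h1 : π x * (clip M' L (π y / π x) / Z x) ≤ π y / Z x := by
          rw [mul_div_assoc']
          apply (div_le_div_iff_of_pos_right hZxpos).2
          calc π x * clip M' L (π y / π x) ≤ π x * (π y / π x) :=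
                mul_le_mul_of_nonneg_left hclipu (hπpos x).le
          _ = π y := by
                rw [mul_div_assoc', mul_comm, mul_div_assoc, div_self (hπpos x).ne', mul_one]
        have h2 : π y / Z x ≤ π y / L := by
          apply div_le_div_of_nonneg_left (hπpos y).le hL0 hZx
        have h3 : π y / L ≤ π y * (clip M' L (π x / π y) / Z y) := by
          have h4 : M' / (M' * L) ≤ clip M' L (π x / π y) / Z y :=
            div_le_div₀ (le_trans hM0.le hclipy) hclipy hZypos hZy
          have h5 : M' / (M' * L) = 1 / L := by
            rw [← div_div, div_self hM0.ne']
          rw [h5] at h4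
          calc π y / L = π y * (1 / L) := by ring
          _ ≤ π y * (clip M' L (π x / π y) / Z y) :=
              mul_le_mul_of_nonneg_left h4 (hπpos y).le
        linarith
      have hacc : P x y = clip M' L (π y / π x) / Z x := by
        rw [hPoff y hyx]
        have hd0 : 0 < π x * Kh π N M' L x y := mul_pos (hπpos x) (hKpos x y hyN)
        have hr : (1:ℝ) ≤ (π y * Kh π N M' L y x) / (π x * Kh π N M' L x y) :=
          (one_le_div hd0).2 hmain
        rw [min_eq_left hr, mul_one, hKxy]
      have hlogu : Real.log (π y / π x) = Real.log (π y) - Real.log (π x) :=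
        Real.log_div (hπpos y).ne' (hπpos x).ne'
      have hVy : V y = V x * Real.exp (Real.log (π y / π x) / Real.log (piMin π)) := by
        rw [hVdef]
        simp only
        rw [← Real.exp_add]
        congr 1
        rw [hlogu]
        field_simp
        ring
      have hlogu0 : 0 ≤ Real.log (π y / π x) :=
        Real.log_nonneg (le_trans hM1 hu)
      have hs0 : Real.log (π y / π x) / Real.log (piMin π) ≤ 0 :=
        div_nonpos_iff.2 (Or.inl ⟨hlogu0, hlpm.le⟩)
      have hsm1 : -1 ≤ Real.log (π y / π x) / Real.log (piMin π) := by
        rw [le_div_iff_of_neg hlpm]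
        rw [hlogu]
        linarith [hlognp y, hloglb x]
      have hexp : Real.exp (Real.log (π y / π x) / Real.log (piMin π)) - 1
          ≤ Real.log (π y / π x) / Real.log (piMin π) / 2 := by
        linarith [exp_le_one_add_half hsm1 hs0]
      have hVx0 : (0:ℝ) < V x := lt_of_lt_of_le one_pos (hV1 x)
      have hc0' : (0:ℝ) ≤ clip M' L (π y / π x) / Z x :=
        div_nonneg (le_trans hM0.le (clip_ge hMleL _)) hZxpos.le
      rw [hacc, hVy]
      have h6 : V x * Real.exp (Real.log (π y / π x) / Real.log (piMin π)) - V x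
          = V x * (Real.exp (Real.log (π y / π x) / Real.log (piMin π)) - 1) := by ring
      rw [h6]
      have h7 : V x * (Real.exp (Real.log (π y / π x) / Real.log (piMin π)) - 1)
          ≤ V x * (Real.log (π y / π x) / Real.log (piMin π) / 2) :=
        mul_le_mul_of_nonneg_left hexp hVx0.le
      calc clip M' L (π y / π x) / Z x
            * (V x * (Real.exp (Real.log (π y / π x) / Real.log (piMin π)) - 1))
          ≤ clip M' L (π y / π x) / Z x
            * (V x * (Real.log (π y / π x) / Real.log (piMin π) / 2)) :=
            mul_le_mul_of_nonneg_left h7 hc0'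
      _ = V x / (2 * Real.log (piMin π))
            * (clip M' L (π y / π x) / Z x * Real.log (π y / π x)) := by
          field_simp [hlpm.ne, hZxpos.ne']
    have hF : V x / (2 * Real.log (piMin π) * Z x) ≤ 0 := by
      apply div_nonpos_iff.2
      apply Or.inl
      constructor
      · linarith [hV1 x]
      · nlinarith [hZxpos, hlpm]
    calc ∑ y ∈ G, P x y * (V y - V x)
        ≤ ∑ y ∈ G, V x / (2 * Real.log (piMin π))
            * (clip M' L (π y / π x) / Z x * Real.log (π y / π x)) :=
          Finset.sum_le_sum hstep
    _ = V x / (2 * Real.log (piMin π) * Z x)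
          * ∑ y ∈ G, clip M' L (π y / π x) * Real.log (π y / π x) := by
        rw [Finset.mul_sum]
        apply Finset.sum_congr rfl
        intro y _
        field_simp [hlpm.ne, hZxpos.ne']
    _ ≤ V x / (2 * Real.log (piMin π) * Z x) * (c * Z x) :=
        mul_le_mul_of_nonpos_left hcore hF
    _ = (Real.log L - Real.log M') / (4 * Real.log (piMin π)) * V x := by
        rw [hc]
        field_simp [hlpm.ne, hZxpos.ne']
        ring
  -- final assembly
  have hbb : (0:ℝ) ≤ (Real.exp 1 - 1) * M' ^ 2 / L :=
    div_nonneg (mul_nonneg (by linarith) (by positivity)) hL0.le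
  have hfinal : ∑ y, P x y * V y
      ≤ (1 + (Real.log L - Real.log M') / (4 * Real.log (piMin π))
          + (Real.exp 1 - 1) * M' ^ 2 / L) * V x := by
    rw [hsplit, hdecomp]
    nlinarith [hrest, hgoodsum, hbadsum, hbb, hV1 x,
      mul_nonneg hbb (by linarith [hV1 x] : (0:ℝ) ≤ V x - 1)]
  exact hfinal
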